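/- For every integer n > e^12, setting d = r − 1 = ⌈log n⌉, one has C(2d,d) ≥ r·n and d·r < 1.564·(log n)². -/

import Mathlib

lemma cb_ge_aux (d : ℕ) (hd : 13 ≤ d) :
    ((d : ℝ) + 1) * Real.exp d ≤ Nat.centralBinom d := by
  induction d with
  | zero => omega
  | succ k ih =>
    rcases Nat.lt_or_ge k 13 with h | h
    · have hk : k = 12 := by omega
      subst hk
      have hcb : (Nat.centralBinom 13 : ℝ) = 10400600 := by
        norm_num [Nat.centralBinom, Nat.choose]
      have he : Real.exp 1 < 2.7182818286 := Real.exp_one_lt_d9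
      have hpos : (0:ℝ) ≤ Real.exp 1 := (Real.exp_pos 1).le
      have h13 : Real.exp 13 = (Real.exp 1) ^ 13 := by
        rw [← Real.exp_nat_mul]; norm_num
      have hb : (Real.exp 1) ^ 13 ≤ (2.7182818286:ℝ) ^ 13 :=
        pow_le_pow_left₀ hpos he.le 13
      have : (2.7182818286:ℝ) ^ 13 < 700000 := by norm_num
      push_cast
      rw [hcb, h13]
      nlinarith [pow_nonneg hpos 13]
    · have ih' := ih h
      have hrec := Nat.succ_mul_centralBinom_succ k
      have hrecR : ((k : ℝ) + 1) * Nat.centralBinom (k + 1)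
          = 2 * (2 * k + 1) * Nat.centralBinom k := by
        exact_mod_cast hrec
      have he : Real.exp 1 < 2.7182818286 := Real.exp_one_lt_d9
      have hexp : Real.exp (↑(k + 1)) = Real.exp k * Real.exp 1 := by
        push_cast; rw [← Real.exp_add]
      have hkpos : (0:ℝ) < (k:ℝ) + 1 := by positivity
      have hek : (0:ℝ) < Real.exp k := Real.exp_pos _
      -- suffices: ((k+1)+1) * exp(k+1) * (k+1) ≤ (k+1) * CB(k+1) = 2(2k+1) CB k
      have key : (((k:ℝ) + 1) + 1) * (Real.exp k * Real.exp 1) * ((k:ℝ)+1)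
          ≤ 2 * (2 * (k:ℝ) + 1) * Nat.centralBinom k := by
        have hk13 : (13:ℝ) ≤ (k:ℝ) := by exact_mod_cast h
        have step1 : ((k:ℝ) + 2) * Real.exp 1 ≤ 2 * (2 * (k:ℝ) + 1) := by
          nlinarith [he, hk13, Real.exp_pos 1]
        have step2 := mul_le_mul step1 ih'
          (by positivity) (by nlinarith)
        nlinarith [step2, Real.exp_pos k]
      push_cast
      push_cast at hexp
      rw [hexp]
      have h2 : ((k:ℝ)+1) * ((((k:ℝ)+1)+1) * (Real.exp k * Real.exp 1))
          ≤ ((k:ℝ)+1) * (Nat.centralBinom (k+1) : ℝ) := by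
        rw [hrecR]; nlinarith [key]
      have := (mul_le_mul_iff_right₀ hkpos).mp h2
      linarith [this]

/-- For `n > e^12`, setting `d = r − 1 = ⌈log n⌉`, one has `C(2d,d) ≥ r·n` and
`d·r < 1.564·(log n)²`. -/
theorem stmt_9 (n : ℕ) (hn : (n : ℝ) > Real.exp 12)
    (d r : ℕ) (hd : d = ⌈Real.log n⌉₊) (hr : r = d + 1) :
    Nat.choose (2 * d) d ≥ r * n ∧
      (d : ℝ) * r < 1.564 * (Real.log n) ^ 2 := by
  have hn0 : (0:ℝ) < n := lt_trans (Real.exp_pos 12) hn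
  have hL : Real.log n > 12 := by
    have := Real.log_lt_log (Real.exp_pos 12) hn
    rwa [Real.log_exp] at this
  have hL0 : (0:ℝ) ≤ Real.log n := by linarith
  have hd13 : 13 ≤ d := by
    rw [hd]
    have : (12:ℕ) < ⌈Real.log n⌉₊ := by
      rw [Nat.lt_ceil]; exact_mod_cast hL
    omega
  have hdL : Real.log n ≤ (d:ℝ) := by rw [hd]; exact Nat.le_ceil _
  have hdL' : (d:ℝ) < Real.log n + 1 := by
    rw [hd]; exact_mod_cast Nat.ceil_lt_add_one hL0
  constructor
  · have hcb := cb_ge_aux d hd13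
    have hne : (n:ℝ) ≤ Real.exp d := by
      calc (n:ℝ) = Real.exp (Real.log n) := (Real.exp_log hn0).symm
        _ ≤ Real.exp d := Real.exp_le_exp.mpr hdL
    have : ((r:ℝ)) * n ≤ Nat.centralBinom d := by
      rw [hr]; push_cast
      calc ((d:ℝ) + 1) * n ≤ ((d:ℝ) + 1) * Real.exp d := by
            apply mul_le_mul_of_nonneg_left hne; positivity
        _ ≤ _ := hcb
    have hnat : r * n ≤ Nat.centralBinom d := by exact_mod_cast this
    simpa [Nat.centralBinom] using hnat
  · rw [hr]; push_cast
    nlinarith [hdL', hL]
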